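/- Let n = 2^L for an integer L ≥ 1, and let A ∈ ℝ^{d×n} be a matrix whose first column is zero (A_{i,1} = 0 for all i ∈ [d]). For j ∈ {0,1,…,n} and k ∈ {0,1,…,L}, define b_{j,k} ∈ ℝ^d to be the column of A with index 1 + 2^k · j if 1 + 2^k · j ≤ n, and the zero vector otherwise. Then: (1) for each i ∈ [d], max_{j∈[n]} A_{i,j}² ≤ L · ∑_{k=0}^{L−1} ∑_{j=1}^{n} (b_{j,k} − b_{j−1,k})_i²; and (2) ∑_{i=1}^{d} max_{j∈[n]} A_{i,j}² ≤ L · ∑_{k=0}^{L−1} ∑_{j=1}^{n} ‖b_{j,k} − b_{j−1,k}‖₂². -/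

import Mathlib

theorem stmt_12 {d n L : ℕ} (hd : 1 ≤ d) (hL : 1 ≤ L) (hn : n = 2 ^ L)
    (A : ℕ → ℕ → ℝ) (hA1 : ∀ i ∈ Finset.Icc 1 d, A i 1 = 0)
    (b : ℕ → ℕ → ℕ → ℝ)
    (hb : ∀ (j k i : ℕ), b j k i = if 1 + 2 ^ k * j ≤ n then A i (1 + 2 ^ k * j) else 0)
    (hne : (Finset.Icc 1 n).Nonempty) :
    (∀ i ∈ Finset.Icc 1 d,
      ((Finset.Icc 1 n).sup' hne fun j => A i j ^ 2) ≤
        (L : ℝ) * ∑ k ∈ Finset.range L, ∑ j ∈ Finset.Icc 1 n,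
          (b j k i - b (j - 1) k i) ^ 2) ∧
    (∑ i ∈ Finset.Icc 1 d, (Finset.Icc 1 n).sup' hne (fun j => A i j ^ 2)) ≤
      (L : ℝ) * ∑ k ∈ Finset.range L, ∑ j ∈ Finset.Icc 1 n,
        ∑ i ∈ Finset.Icc 1 d, (b j k i - b (j - 1) k i) ^ 2 := by
  have hn1 : 1 ≤ n := by rw [hn]; exact Nat.one_le_two_pow
  -- main pointwise bound
  have key : ∀ i ∈ Finset.Icc 1 d, ∀ m ∈ Finset.Icc 1 n,
      A i m ^ 2 ≤ (L : ℝ) * ∑ k ∈ Finset.range L, ∑ j ∈ Finset.Icc 1 n,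
        (b j k i - b (j - 1) k i) ^ 2 := by
    intro i hi m hm
    simp only [Finset.mem_Icc] at hm
    obtain ⟨hm1, hmn⟩ := hm
    set x := m - 1 with hx
    have hxm : m = 1 + x := by omega
    set c : ℕ → ℕ := fun k => (x + 2 ^ k - 1) / 2 ^ k with hc
    have hpow : ∀ k : ℕ, 0 < 2 ^ k := fun k => Nat.pow_pos (by norm_num)
    have hc0 : c 0 = x := by simp [hc]
    have hcx : ∀ k, c k ≤ x := by
      intro k
      have h1 : x ≤ 2 ^ k * x := Nat.le_mul_of_pos_left x (hpow k)
      have h2 : 2 ^ k * (x + 1) = 2 ^ k * x + 2 ^ k := by ring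
      have h3 : x + 2 ^ k - 1 < 2 ^ k * (x + 1) := by have := hpow k; omega
      have h4 : c k < x + 1 := Nat.div_lt_of_lt_mul h3
      omega
    have hcsucc : ∀ k, c (k + 1) = (c k + 1) / 2 := by
      intro k
      have h1 : c k + 1 = (x + 2 ^ (k + 1) - 1) / 2 ^ k := by
        have hp : 2 ^ (k + 1) = 2 * 2 ^ k := by rw [pow_succ]; ring
        have h2 : x + 2 ^ (k + 1) - 1 = (x + 2 ^ k - 1) + 2 ^ k := by
          have := hpow k; omega
        rw [h2, Nat.add_div_right _ (hpow k)]
      rw [hc]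
      simp only
      rw [h1, Nat.div_div_eq_div_mul, ← pow_succ]
    set f : ℕ → ℝ := fun k => b (c k) k i with hf
    have hf0 : f 0 = A i m := by
      simp only [hf, hc0, hb, pow_zero, one_mul]
      rw [if_pos (by omega), ← hxm]
    have hfL : f L = 0 := by
      simp only [hf, hb]
      rcases Nat.eq_zero_or_pos (c L) with h | h
      · rw [h, mul_zero, if_pos (by omega)]
        exact hA1 i hi
      · rw [if_neg]
        have : 2 ^ L ≤ 2 ^ L * c L := Nat.le_mul_of_pos_right _ h
        omega
    have htel : A i m = ∑ k ∈ Finset.range L, (f k - f (k + 1)) := by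
      rw [Finset.sum_range_sub' f, hf0, hfL, sub_zero]
    -- per-term bound
    have hterm : ∀ k ∈ Finset.range L,
        (f k - f (k + 1)) ^ 2 ≤ ∑ j ∈ Finset.Icc 1 n, (b j k i - b (j - 1) k i) ^ 2 := by
      intro k _
      have hnonneg : ∀ j ∈ Finset.Icc 1 n, (0:ℝ) ≤ (b j k i - b (j - 1) k i) ^ 2 :=
        fun j _ => sq_nonneg _
      rcases Nat.even_or_odd (c k) with ⟨t, ht⟩ | ⟨t, ht⟩
      · -- even : f k = f (k+1)
        have hceq : 2 ^ (k + 1) * c (k + 1) = 2 ^ k * c k := by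
          rw [hcsucc k, ht]
          have : (t + t + 1) / 2 = t := by omega
          rw [this, pow_succ]; ring
        have : f k = f (k + 1) := by
          simp only [hf, hb, hceq, ht]
        rw [this, sub_self]
        simpa using Finset.sum_nonneg hnonneg
      · -- odd : difference is a single term with j = c k + 1
        have hceq : 2 ^ (k + 1) * c (k + 1) = 2 ^ k * (c k + 1) := by
          rw [hcsucc k, ht]
          have : (2 * t + 1 + 1) / 2 = t + 1 := by omega
          rw [this, pow_succ]; ring
        have hfk1 : f (k + 1) = b (c k + 1) k i := by
          simp only [hf, hb, hceq]
        have hjmem : c k + 1 ∈ Finset.Icc 1 n := by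
          simp only [Finset.mem_Icc]
          have := hcx k
          omega
        have : (f k - f (k + 1)) ^ 2 = (b (c k + 1) k i - b ((c k + 1) - 1) k i) ^ 2 := by
          rw [hfk1]
          have : (c k + 1) - 1 = c k := by omega
          rw [this, hf]
          ring
        rw [this]
        exact Finset.single_le_sum hnonneg hjmem
    calc A i m ^ 2 = (∑ k ∈ Finset.range L, (f k - f (k + 1))) ^ 2 := by rw [htel]
      _ ≤ (Finset.range L).card * ∑ k ∈ Finset.range L, (f k - f (k + 1)) ^ 2 :=
          sq_sum_le_card_mul_sum_sq
      _ = (L : ℝ) * ∑ k ∈ Finset.range L, (f k - f (k + 1)) ^ 2 := by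
          rw [Finset.card_range]
      _ ≤ (L : ℝ) * ∑ k ∈ Finset.range L, ∑ j ∈ Finset.Icc 1 n,
            (b j k i - b (j - 1) k i) ^ 2 := by
          apply mul_le_mul_of_nonneg_left (Finset.sum_le_sum hterm)
          positivity
  have part1 : ∀ i ∈ Finset.Icc 1 d,
      ((Finset.Icc 1 n).sup' hne fun j => A i j ^ 2) ≤
        (L : ℝ) * ∑ k ∈ Finset.range L, ∑ j ∈ Finset.Icc 1 n,
          (b j k i - b (j - 1) k i) ^ 2 := by
    intro i hi
    exact Finset.sup'_le hne _ (fun m hm => key i hi m hm)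
  refine ⟨part1, ?_⟩
  calc ∑ i ∈ Finset.Icc 1 d, (Finset.Icc 1 n).sup' hne (fun j => A i j ^ 2)
      ≤ ∑ i ∈ Finset.Icc 1 d, (L : ℝ) * ∑ k ∈ Finset.range L, ∑ j ∈ Finset.Icc 1 n,
          (b j k i - b (j - 1) k i) ^ 2 :=
        Finset.sum_le_sum (fun i hi => part1 i hi)
    _ = (L : ℝ) * ∑ k ∈ Finset.range L, ∑ j ∈ Finset.Icc 1 n,
          ∑ i ∈ Finset.Icc 1 d, (b j k i - b (j - 1) k i) ^ 2 := by
        rw [← Finset.mul_sum]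
        congr 1
        rw [Finset.sum_comm]
        congr 1
        ext k
        rw [Finset.sum_comm]
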